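/- arXiv:2505.13250 — 2 statements merged into one kernel-verified Lean document; each statement's English description precedes it below -/
import Mathlib

section
/- Let t_r > 0, τ ∈ ℝ, η > 0, S > 0, α > 0, N_r > 0 be real numbers, b ≥ 0, and set B = b · t_r. Let g : ℝ → ℝ be a nonnegative measurable function with ∫_0^{t_r} g(t − τ) dt = 1, and define the pulse s(t) = S · g(t). Then ∫_0^{t_r} s(t − τ)²/(η α s(t − τ) + b) dt is finite and strictly positive, and [ N_r η² ∫_0^{t_r} s(t − τ)² / (η α s(t − τ) + b) dt ]^{−1} ≤ (η S α + B) / (N_r η² S²). (This is the inequality of Theorem 2: the Cramér–Rao lower bound of the reflectivity estimator that uses timestamps and depth is uniformly lower than that of the estimator based on photon counts alone.) -/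
open MeasureTheory

/-- Theorem 2 (CRLB comparison): with pulse `s(t) = S g(t)`, normalized shape `g`
fully supported on `[0, t_r]` (so `∫₀^{t_r} g(t − τ) dt = 1`), background rate
`b ≥ 0` and noise energy `B = b t_r`, the integral
`∫₀^{t_r} s(t − τ)²/(η α s(t − τ) + b) dt` is finite and strictly positive, and
`[N_r η² ∫₀^{t_r} s(t − τ)²/(η α s(t − τ) + b) dt]⁻¹ ≤ (η S α + B)/(N_r η² S²)`. -/
theorem crlb_comparison
    (tr τ η S α Nr b : ℝ)
    (htr : 0 < tr) (hη : 0 < η) (hS : 0 < S) (hα : 0 < α) (hNr : 0 < Nr) (hb : 0 ≤ b)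
    (g : ℝ → ℝ) (hgmeas : Measurable g) (hgnn : ∀ u, 0 ≤ g u)
    (hgint : IntervalIntegrable (fun u => g (u - τ)) volume 0 tr)
    (hg1 : ∫ u in (0:ℝ)..tr, g (u - τ) = 1) :
    IntervalIntegrable
      (fun u => (S * g (u - τ)) ^ 2 / (η * α * (S * g (u - τ)) + b)) volume 0 tr
    ∧ 0 < ∫ u in (0:ℝ)..tr, (S * g (u - τ)) ^ 2 / (η * α * (S * g (u - τ)) + b)
    ∧ (Nr * η ^ 2 * ∫ u in (0:ℝ)..tr,
          (S * g (u - τ)) ^ 2 / (η * α * (S * g (u - τ)) + b))⁻¹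
        ≤ (η * S * α + b * tr) / (Nr * η ^ 2 * S ^ 2) := by
  -- notation
  set f : ℝ → ℝ := fun u => S * g (u - τ) with hf_def
  set h : ℝ → ℝ := fun u => η * α * f u + b with hh_def
  set q : ℝ → ℝ := fun u => f u ^ 2 / h u with hq_def
  have hfnn : ∀ u, 0 ≤ f u := fun u => mul_nonneg hS.le (hgnn _)
  have hhnn : ∀ u, 0 ≤ h u := fun u =>
    add_nonneg (mul_nonneg (mul_nonneg hη.le hα.le) (hfnn u)) hb
  have hqnn : ∀ u, 0 ≤ q u := fun u => div_nonneg (sq_nonneg _) (hhnn u)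
  have hfmeas : Measurable f := (hgmeas.comp (measurable_id.sub measurable_const)).const_mul S
  have hhmeas : Measurable h := (hfmeas.const_mul _).add measurable_const
  have hqmeas : Measurable q := (hfmeas.pow measurable_const).div hhmeas
  -- pointwise bound q ≤ f / (η α)
  have hqle : ∀ u, q u ≤ f u / (η * α) := by
    intro u
    rcases eq_or_lt_of_le (hfnn u) with hf0 | hf0
    · simp [hq_def, hh_def, ← hf0]
    · have hd : 0 < η * α * f u := by positivity
      have : q u ≤ f u ^ 2 / (η * α * f u) := by
        apply div_le_div_of_nonneg_left (sq_nonneg _) hd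
        simpa [hh_def] using hb
      calc q u ≤ f u ^ 2 / (η * α * f u) := this
        _ = f u / (η * α) := by field_simp
  -- interval integrability of f and q
  have hfint : IntervalIntegrable f volume 0 tr := hgint.const_mul S
  have hqint : IntervalIntegrable q volume 0 tr := by
    refine (hfint.div_const (η * α)).mono_fun hqmeas.aestronglyMeasurable ?_
    filter_upwards with u
    rw [Real.norm_of_nonneg (hqnn u), Real.norm_of_nonneg
      (div_nonneg (hfnn u) (by positivity))]
    exact hqle u
  have hhint : IntervalIntegrable h volume 0 tr :=
    (hfint.const_mul _).add intervalIntegrable_const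
  -- values of integrals
  have hfval : ∫ u in (0:ℝ)..tr, f u = S := by
    simp only [hf_def, intervalIntegral.integral_const_mul, hg1, mul_one]
  have hhval : ∫ u in (0:ℝ)..tr, h u = η * α * S + b * tr := by
    rw [hh_def]
    rw [intervalIntegral.integral_add (hfint.const_mul _) intervalIntegrable_const]
    rw [intervalIntegral.integral_const_mul, hfval]
    simp [htr.le, mul_comm]
  -- switch to set integrals on Ioc
  have hIoc : ∀ F : ℝ → ℝ, (∫ u in (0:ℝ)..tr, F u) = ∫ u in Set.Ioc (0:ℝ) tr, F u :=
    fun F => intervalIntegral.integral_of_le htr.le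
  set μ : Measure ℝ := volume.restrict (Set.Ioc (0:ℝ) tr) with hμ
  have hqInt : Integrable q μ := by
    rw [hμ, ← IntegrableOn]
    exact (intervalIntegrable_iff_integrableOn_Ioc_of_le htr.le).mp hqint
  have hhInt : Integrable h μ := by
    rw [hμ, ← IntegrableOn]
    exact (intervalIntegrable_iff_integrableOn_Ioc_of_le htr.le).mp hhint
  -- Cauchy–Schwarz: S = ∫ f = ∫ √q √h ≤ √(∫q) √(∫h)
  set I : ℝ := ∫ u in (0:ℝ)..tr, q u with hI_def
  have hInn : 0 ≤ I := by
    rw [hI_def, hIoc]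
    exact integral_nonneg fun u => hqnn u
  set J : ℝ := η * α * S + b * tr with hJ_def
  have hJpos : 0 < J := by positivity
  have hFG : ∀ u, Real.sqrt (q u) * Real.sqrt (h u) = f u := by
    intro u
    rw [← Real.sqrt_mul (hqnn u)]
    rcases eq_or_lt_of_le (hhnn u) with hh0 | hh0
    · have hf0 : f u = 0 := by
        by_contra hne
        have h1 : 0 < η * α * f u := by
          have := lt_of_le_of_ne (hfnn u) (Ne.symm hne); positivity
        have h2 : h u = η * α * f u + b := rfl
        linarith
      simp [hq_def, ← hh0, hf0]
    · rw [hq_def]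
      have : f u ^ 2 / h u * h u = f u ^ 2 := by field_simp
      rw [this, Real.sqrt_sq (hfnn u)]
  have hconj : Real.HolderConjugate 2 2 := Real.HolderConjugate.two_two
  have hsqq : MemLp (fun u => Real.sqrt (q u)) (ENNReal.ofReal 2) μ := by
    have : ENNReal.ofReal (2:ℝ) = 2 := by norm_num [ENNReal.ofReal_ofNat]
    rw [this, memLp_two_iff_integrable_sq
      (hqmeas.sqrt.aestronglyMeasurable)]
    refine hqInt.congr ?_
    filter_upwards with u
    rw [Real.sq_sqrt (hqnn u)]
  have hsqh : MemLp (fun u => Real.sqrt (h u)) (ENNReal.ofReal 2) μ := by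
    have : ENNReal.ofReal (2:ℝ) = 2 := by norm_num [ENNReal.ofReal_ofNat]
    rw [this, memLp_two_iff_integrable_sq
      (hhmeas.sqrt.aestronglyMeasurable)]
    refine hhInt.congr ?_
    filter_upwards with u
    rw [Real.sq_sqrt (hhnn u)]
  have hCS := integral_mul_le_Lp_mul_Lq_of_nonneg hconj
    (Filter.Eventually.of_forall fun u => Real.sqrt_nonneg (q u))
    (Filter.Eventually.of_forall fun u => Real.sqrt_nonneg (h u)) hsqq hsqh
  have hCS' : S ≤ I ^ ((1:ℝ)/2) * J ^ ((1:ℝ)/2) := by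
    have sq2 : ∀ x : ℝ, 0 ≤ x → Real.sqrt x ^ (2:ℝ) = x := by
      intro x hx
      rw [show (2:ℝ) = ((2:ℕ):ℝ) by norm_num, Real.rpow_natCast, Real.sq_sqrt hx]
    have e1 : ∫ u, Real.sqrt (q u) * Real.sqrt (h u) ∂μ = S := by
      rw [show (fun u => Real.sqrt (q u) * Real.sqrt (h u)) = f from funext hFG]
      rw [← hIoc f]; exact hfval
    have e2 : ∫ u, Real.sqrt (q u) ^ (2:ℝ) ∂μ = I := by
      rw [hI_def, hIoc]
      refine integral_congr_ae (Filter.Eventually.of_forall fun u => ?_)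
      exact sq2 _ (hqnn u)
    have e3 : ∫ u, Real.sqrt (h u) ^ (2:ℝ) ∂μ = J := by
      rw [← hhval, hIoc]
      refine integral_congr_ae (Filter.Eventually.of_forall fun u => ?_)
      exact sq2 _ (hhnn u)
    rw [e1, e2, e3] at hCS
    exact hCS
  have hSsq : S ^ 2 ≤ I * J := by
    have h2 : S ^ 2 ≤ (I ^ ((1:ℝ)/2) * J ^ ((1:ℝ)/2)) ^ 2 := by
      apply pow_le_pow_left₀ hS.le hCS'
    calc S ^ 2 ≤ (I ^ ((1:ℝ)/2) * J ^ ((1:ℝ)/2)) ^ 2 := h2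
      _ = (I ^ ((1:ℝ)/2)) ^ 2 * (J ^ ((1:ℝ)/2)) ^ 2 := by ring
      _ = I * J := by
          rw [← Real.rpow_natCast (I ^ ((1:ℝ)/2)) 2, ← Real.rpow_natCast (J ^ ((1:ℝ)/2)) 2,
            ← Real.rpow_mul hInn, ← Real.rpow_mul hJpos.le]
          norm_num
  have hIpos : 0 < I := by
    rcases hInn.lt_or_eq with h' | h'
    · exact h'
    · exfalso; rw [← h'] at hSsq; simp at hSsq; nlinarith
  have hIlb : S ^ 2 / J ≤ I := (div_le_iff₀ hJpos).mpr hSsq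
  refine ⟨hqint, hIpos, ?_⟩
  -- final inequality
  have hden : 0 < Nr * η ^ 2 * (S ^ 2 / J) := by positivity
  have h1 : (Nr * η ^ 2 * I)⁻¹ ≤ (Nr * η ^ 2 * (S ^ 2 / J))⁻¹ := by
    apply inv_anti₀ hden
    have : 0 ≤ Nr * η ^ 2 := by positivity
    nlinarith
  calc (Nr * η ^ 2 * I)⁻¹ ≤ (Nr * η ^ 2 * (S ^ 2 / J))⁻¹ := h1
    _ = J / (Nr * η ^ 2 * S ^ 2) := by field_simp
    _ = (η * S * α + b * tr) / (Nr * η ^ 2 * S ^ 2) := by rw [hJ_def]; ring_nf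
end

section
/- Let t_r > 0, a > 0, b ≥ 0 be real numbers and g : [0, t_r] → ℝ a continuous, strictly positive, non-constant function with ∫_0^{t_r} g(t) dt = 1. Then equality holds in the inequality 1 ≤ ( ∫_0^{t_r} g(t)² / (a g(t) + b) dt ) · ( a + b t_r ) if and only if b = 0. (This is the equality case of Theorem 2: the two Cramér–Rao lower bounds coincide exactly when the background noise vanishes.) -/
open MeasureTheory

/-- Equality case of Theorem 2: for a continuous, strictly positive, non-constant
`g` on `[0, t_r]` with `∫₀^{t_r} g = 1`, equality holds in
`1 ≤ (∫₀^{t_r} g²/(a g + b)) · (a + b t_r)` if and only if `b = 0`. -/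
theorem crlb_equality_iff_no_noise
    (tr a b : ℝ) (htr : 0 < tr) (ha : 0 < a) (hb : 0 ≤ b)
    (g : ℝ → ℝ) (hgc : ContinuousOn g (Set.Icc (0:ℝ) tr))
    (hgpos : ∀ u ∈ Set.Icc (0:ℝ) tr, 0 < g u)
    (hgnc : ∃ u ∈ Set.Icc (0:ℝ) tr, ∃ v ∈ Set.Icc (0:ℝ) tr, g u ≠ g v)
    (hg1 : ∫ u in (0:ℝ)..tr, g u = 1) :
    (∫ u in (0:ℝ)..tr, g u ^ 2 / (a * g u + b)) * (a + b * tr) = 1 ↔ b = 0 := by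
  have huIcc : Set.uIcc (0:ℝ) tr = Set.Icc (0:ℝ) tr := Set.uIcc_of_le htr.le
  constructor
  · -- forward: equality ⇒ b = 0
    intro heq
    by_contra hbne
    have hbpos : 0 < b := lt_of_le_of_ne hb (Ne.symm hbne)
    have habtr : 0 < a + b * tr := by positivity
    set c : ℝ := (a + b * tr)⁻¹ with hc
    have hcpos : 0 < c := inv_pos.mpr habtr
    have hc1 : c * (a + b * tr) = 1 := inv_mul_cancel₀ habtr.ne'
    clear_value c
    set w : ℝ → ℝ := fun u => a * g u + b with hw
    have hwpos : ∀ u ∈ Set.Icc (0:ℝ) tr, 0 < w u := fun u hu => by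
      have := hgpos u hu; simp only [hw]; positivity
    have hwc : ContinuousOn w (Set.Icc (0:ℝ) tr) :=
      (continuousOn_const.mul hgc).add continuousOn_const
    set h : ℝ → ℝ := fun u => (g u - c * w u) ^ 2 / w u with hh
    have hhc : ContinuousOn h (Set.Icc (0:ℝ) tr) :=
      ((hgc.sub (continuousOn_const.mul hwc)).pow 2).div hwc
        (fun u hu => (hwpos u hu).ne')
    have hhnn : ∀ u ∈ Set.Icc (0:ℝ) tr, 0 ≤ h u := fun u hu => by
      have := hwpos u hu; positivity
    -- integrability
    have hig : IntervalIntegrable g volume 0 tr :=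
      (huIcc ▸ hgc).intervalIntegrable
    have hiw : IntervalIntegrable w volume 0 tr :=
      (huIcc ▸ hwc).intervalIntegrable
    have hih : IntervalIntegrable h volume 0 tr :=
      (huIcc ▸ hhc).intervalIntegrable
    have hiq : IntervalIntegrable (fun u => 2 * c * g u - c ^ 2 * w u) volume 0 tr :=
      ((hig.const_mul _).sub (hiw.const_mul _))
    -- ∫ w = a + b * tr
    have hintw : ∫ u in (0:ℝ)..tr, w u = a + b * tr := by
      simp only [hw]
      rw [intervalIntegral.integral_add (hig.const_mul a) intervalIntegrable_const,
        intervalIntegral.integral_const_mul, hg1]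
      simp [mul_comm]
    -- pointwise decomposition
    have hdec : ∀ u ∈ Set.uIcc (0:ℝ) tr,
        g u ^ 2 / (a * g u + b) = (2 * c * g u - c ^ 2 * w u) + h u := by
      have key : ∀ G W : ℝ, W ≠ 0 →
          G ^ 2 / W = (2 * c * G - c ^ 2 * W) + (G - c * W) ^ 2 / W := by
        intro G W hW
        field_simp
        ring
      intro u hu
      rw [huIcc] at hu
      exact key (g u) (w u) (hwpos u hu).ne'
    have hsplit : ∫ u in (0:ℝ)..tr, g u ^ 2 / (a * g u + b)
        = (∫ u in (0:ℝ)..tr, (2 * c * g u - c ^ 2 * w u)) + ∫ u in (0:ℝ)..tr, h u := by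
      rw [intervalIntegral.integral_congr hdec, intervalIntegral.integral_add hiq hih]
    have hintq : ∫ u in (0:ℝ)..tr, (2 * c * g u - c ^ 2 * w u) = c := by
      rw [intervalIntegral.integral_sub (hig.const_mul _) (hiw.const_mul _),
        intervalIntegral.integral_const_mul, intervalIntegral.integral_const_mul,
        hg1, hintw]
      nlinarith
    -- h is positive somewhere
    obtain ⟨u₀, hu₀, hu₀ne⟩ : ∃ u₀ ∈ Set.Icc (0:ℝ) tr, g u₀ - c * w u₀ ≠ 0 := by
      by_contra hcon
      push_neg at hcon
      obtain ⟨u, hu, v, hv, huv⟩ := hgnc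
      have h1 : g u - c * w u = 0 := hcon u hu
      have h2 : g v - c * w v = 0 := hcon v hv
      have hca : 1 - c * a ≠ 0 := by
        have : c * a < 1 := by nlinarith
        linarith
      apply huv
      have e1 : g u * (1 - c * a) = c * b := by simp only [hw] at h1; nlinarith
      have e2 : g v * (1 - c * a) = c * b := by simp only [hw] at h2; nlinarith
      have := e1.trans e2.symm
      exact mul_right_cancel₀ hca this
    have hh0 : 0 < h u₀ := by
      have := hwpos u₀ hu₀
      have : 0 < (g u₀ - c * w u₀) ^ 2 := by positivity
      exact div_pos this (hwpos u₀ hu₀)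
    -- ∫ h > 0
    have hinth : 0 < ∫ u in (0:ℝ)..tr, h u := by
      rw [intervalIntegral.integral_pos_iff_support_of_nonneg_ae' ?_ hih]
      · refine ⟨htr, ?_⟩
        -- find a subinterval where h is positive
        have hcw : ContinuousWithinAt h (Set.Icc (0:ℝ) tr) u₀ := hhc u₀ hu₀
        have : ∀ᶠ x in nhdsWithin u₀ (Set.Icc (0:ℝ) tr), 0 < h x :=
          hcw.eventually (eventually_gt_nhds hh0)
        obtain ⟨δ, hδ, hball⟩ := Metric.mem_nhdsWithin_iff.mp this
        set l : ℝ := max 0 (u₀ - δ) with hl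
        set r : ℝ := min tr (u₀ + δ) with hr
        have hlr : l < r := by
          rcases hu₀ with ⟨h1, h2⟩
          simp only [hl, hr, max_lt_iff, lt_min_iff]
          constructor <;> constructor <;> linarith
        have hsub : Set.Ioo l r ⊆ Function.support h ∩ Set.Ioc 0 tr := by
          intro x hx
          rcases hx with ⟨hx1, hx2⟩
          have hx0 : 0 < x := lt_of_le_of_lt (le_max_left _ _) hx1
          have hxtr : x ≤ tr := le_of_lt (lt_of_lt_of_le hx2 (min_le_left _ _))
          have hxball : x ∈ Metric.ball u₀ δ := by
            rw [Metric.mem_ball, Real.dist_eq, abs_lt]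
            constructor
            · have : u₀ - δ ≤ l := le_max_right _ _
              linarith
            · have : r ≤ u₀ + δ := min_le_right _ _
              linarith
          have hxicc : x ∈ Set.Icc (0:ℝ) tr := ⟨hx0.le, hxtr⟩
          refine ⟨(hball ⟨hxball, hxicc⟩).ne', hx0, hxtr⟩
        calc (0:ENNReal) < volume (Set.Ioo l r) := by
              rw [Real.volume_Ioo]; simp [hlr, sub_pos]
          _ ≤ volume (Function.support h ∩ Set.Ioc 0 tr) := measure_mono hsub
      · rw [Set.uIoc_of_le htr.le]
        refine (ae_restrict_iff' measurableSet_Ioc).mpr ?_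
        filter_upwards with x hx
        exact hhnn x ⟨hx.1.le, hx.2⟩
    rw [hsplit, hintq] at heq
    nlinarith [mul_pos hinth habtr]
  · -- reverse: b = 0 ⇒ equality
    intro hb0
    subst hb0
    have hcong : ∀ u ∈ Set.uIcc (0:ℝ) tr, g u ^ 2 / (a * g u + 0) = a⁻¹ * g u := by
      intro u hu
      rw [huIcc] at hu
      have hg := (hgpos u hu).ne'
      field_simp
      ring
    rw [intervalIntegral.integral_congr hcong, intervalIntegral.integral_const_mul, hg1]
    field_simp
    ring
end
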